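/- The function f is strictly decreasing (strictly antitone) on the open interval (r₊, ∞). -/

import Mathlib

theorem stmt_1 (M a l Q θ rp : ℝ) (Δ f : ℝ → ℝ)
    (hM : 0 < M) (ha : 0 < a) (hsub : 0 < M^2 - a^2 + l^2 - Q^2)
    (hθ : θ ∈ Set.Ioo 0 Real.pi)
    (hΔ : ∀ x, Δ x = x^2 - 2*M*x + a^2 - l^2 + Q^2)
    (hrp : rp = M + Real.sqrt (M^2 - a^2 + l^2 - Q^2))
    (hf : ∀ x, f x = ((2*x - 2*M) * (x^2 + (l + a*Real.cos θ)^2) - 4*x*Δ x) /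
        (4*a*x*Real.sqrt (Δ x) * Real.sin θ)) :
    StrictAntiOn f (Set.Ioi rp) := by
  obtain ⟨hθ1, hθ2⟩ := hθ
  have hsin : 0 < Real.sin θ := Real.sin_pos_of_pos_of_lt_pi hθ1 hθ2
  set K : ℝ := a^2 - l^2 + Q^2 with hK
  set c : ℝ := (l + a*Real.cos θ)^2 with hc
  have hc0 : 0 ≤ c := sq_nonneg _
  have hD : 0 < M^2 - K := by rw [hK]; linarith
  have hsqD : Real.sqrt (M^2 - a^2 + l^2 - Q^2) ^ 2 = M^2 - a^2 + l^2 - Q^2 :=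
    Real.sq_sqrt hsub.le
  have hsqDpos : 0 < Real.sqrt (M^2 - a^2 + l^2 - Q^2) := Real.sqrt_pos.2 hsub
  have hrpM : M < rp := by rw [hrp]; linarith
  have hrp0 : 0 < rp := hM.trans hrpM
  have hΔK : ∀ x, Δ x = x^2 - 2*M*x + K := fun x => by rw [hΔ, hK]; ring
  have hfF : f = fun x => ((2*x - 2*M) * (x^2 + c) - 4*x*(x^2 - 2*M*x + K)) /
      (4*a*x*Real.sqrt (x^2 - 2*M*x + K) * Real.sin θ) := by
    funext x; rw [hf, hΔK, hc]
  have key : ∀ x ∈ Set.Ioi rp, ∃ E, HasDerivAt f E x ∧ E < 0 := by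
    intro x hx
    have hxrp : rp < x := hx
    have hx0 : 0 < x := hrp0.trans hxrp
    have hxM : M < x := hrpM.trans hxrp
    have hΔ0 : 0 < x^2 - 2*M*x + K := by
      rw [hK]; nlinarith [hsqD, hsqDpos]
    set s := Real.sqrt (x^2 - 2*M*x + K) with hs
    have hs0 : 0 < s := Real.sqrt_pos.2 hΔ0
    have hs2 : s^2 = x^2 - 2*M*x + K := Real.sq_sqrt hΔ0.le
    have hP : HasDerivAt (fun y : ℝ => y^2 - 2*M*y + K) (2*x - 2*M) x := by
      have h := ((hasDerivAt_pow 2 x).sub ((hasDerivAt_id' x).const_mul (2*M))).add_const K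
      refine h.congr_deriv ?_
      ring
    have hsd : HasDerivAt (fun y : ℝ => Real.sqrt (y^2 - 2*M*y + K))
        (1/(2*s) * (2*x - 2*M)) x := by
      have h := (Real.hasDerivAt_sqrt hΔ0.ne').comp x hP
      simpa [Function.comp_def, hs] using h
    have hA : HasDerivAt (fun y : ℝ => 2*y - 2*M) 2 x := by
      simpa using ((hasDerivAt_id' x).const_mul 2).sub_const (2*M)
    have hB : HasDerivAt (fun y : ℝ => y^2 + c) (2*x) x := by
      simpa using (hasDerivAt_pow 2 x).add_const c
    have hnum := (hA.mul hB).sub (((hasDerivAt_id' x).const_mul 4).mul hP)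
    have hden := (((hasDerivAt_id' x).const_mul (4*a)).mul hsd).mul_const (Real.sin θ)
    have hdpos : 0 < 4*a*x*s*Real.sin θ :=
      mul_pos (mul_pos (mul_pos (by linarith) hx0) hs0) hsin
    have hne : 4*a*x*Real.sqrt (x^2 - 2*M*x + K)*Real.sin θ ≠ 0 := ne_of_gt hdpos
    have hF := hnum.div hden hne
    refine ⟨_, by rw [hfF]; exact hF, ?_⟩
    rw [← hs]
    apply div_neg_of_neg_of_pos _ (pow_pos hdpos 2)
    have hW : (2 * (x ^ 2 + c) + (2 * x - 2 * M) * (2 * x) -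
          (4 * 1 * (x ^ 2 - 2 * M * x + K) + 4 * x * (2 * x - 2 * M))) * x * (x ^ 2 - 2 * M * x + K) -
        ((2 * x - 2 * M) * (x ^ 2 + c) - 4 * x * (x ^ 2 - 2 * M * x + K)) *
          ((x ^ 2 - 2 * M * x + K) + x * (x - M)) < 0 := by
      nlinarith [mul_pos (mul_pos hx0 hx0) (pow_pos (sub_pos.2 hxM) 3),
        mul_nonneg hc0 (mul_pos (sub_pos.2 hxM) hΔ0).le,
        mul_nonneg hc0 (mul_pos hD hx0).le,
        mul_pos (mul_pos hM hD) (mul_pos hx0 hx0)]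
    have e1 : ((2 * (x ^ 2 + c) + (2 * x - 2 * M) * (2 * x) -
            (4 * 1 * (x ^ 2 - 2 * M * x + K) + 4 * x * (2 * x - 2 * M))) *
          (4 * a * x * s * Real.sin θ) -
        ((2 * x - 2 * M) * (x ^ 2 + c) - 4 * x * (x ^ 2 - 2 * M * x + K)) *
          ((4 * a * 1 * s + 4 * a * x * (1 / (2 * s) * (2 * x - 2 * M))) * Real.sin θ)) * (2 * s) =
        8 * a * Real.sin θ * ((2 * (x ^ 2 + c) + (2 * x - 2 * M) * (2 * x) -
            (4 * 1 * (x ^ 2 - 2 * M * x + K) + 4 * x * (2 * x - 2 * M))) * x * (s ^ 2) -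
          ((2 * x - 2 * M) * (x ^ 2 + c) - 4 * x * (x ^ 2 - 2 * M * x + K)) *
            ((s ^ 2) + x * (x - M))) := by
      field_simp
      ring
    rw [hs2] at e1
    have h8 : (0:ℝ) < 8 * a * Real.sin θ := by positivity
    have hneg := mul_neg_of_pos_of_neg h8 hW
    rw [← e1] at hneg
    exact neg_of_mul_neg_left hneg (by linarith)
  refine strictAntiOn_of_deriv_neg (convex_Ioi rp) ?_ ?_
  · intro x hx
    obtain ⟨E, hE, -⟩ := key x hx
    exact hE.differentiableAt.continuousAt.continuousWithinAt
  · intro x hx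
    rw [interior_Ioi] at hx
    obtain ⟨E, hE, hneg⟩ := key x hx
    rwa [hE.deriv]
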